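/- Geometric representation of spin states: for every n ≥ 1 and every unit vector ψ ∈ ℂ^(n+1), there exist n sphere points ω_1, …, ω_n (each ω_k = (p_k, φ_k) ∈ [0,1] × [0,2π)) and a constant c > 0 such that |⟨v_n(Ω), ψ⟩|² = c · ∏_{k=1}^n |⟨v_1(Ω), v_1(ω_k)⟩|² for every Ω = (p,φ) ∈ [0,1] × [0,2π). -/

import Mathlib

open MeasureTheory

/-- The Bloch coherent state of spin `n/2` with parameters `Ω = (p, φ)`:
components `(v_n(Ω))_k = √(binom n k) · p^(k/2) · (1-p)^((n-k)/2) · exp(-i k φ)`. -/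
noncomputable def bloch (n : ℕ) (Ω : ℝ × ℝ) : EuclideanSpace ℂ (Fin (n + 1)) :=
  WithLp.toLp 2 fun (k : Fin (n + 1)) => (↑(Real.sqrt (n.choose k) * Real.sqrt Ω.1 ^ (k : ℕ) *
      Real.sqrt (1 - Ω.1) ^ (n - (k : ℕ))) : ℂ) *
    Complex.exp (-((k : ℕ) : ℂ) * Complex.I * (Ω.2 : ℂ))

/-- A sphere point: `(p, φ) ∈ [0,1] × [0, 2π)`. -/
def IsSpherePt (Ω : ℝ × ℝ) : Prop :=
  Ω.1 ∈ Set.Icc (0 : ℝ) 1 ∧ Ω.2 ∈ Set.Ico (0 : ℝ) (2 * Real.pi)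

/-- The overlap `⟨v_n(Ω), ψ⟩` (inner product conjugate-linear in the first argument). -/
noncomputable def ov (n : ℕ) (Ω : ℝ × ℝ) (ψ : EuclideanSpace ℂ (Fin (n + 1))) : ℂ :=
  inner ℂ (bloch n Ω) ψ

/-- Normalized integral over the sphere: `∫ f(Ω) dΩ/4π = ∫_0^1 ∫_0^{2π} f(p,φ) dφ/(2π) dp`. -/
noncomputable def sphereInt (f : ℝ × ℝ → ℝ) : ℝ :=
  ∫ p in (0 : ℝ)..1, (∫ φ in (0 : ℝ)..(2 * Real.pi), f (p, φ)) / (2 * Real.pi)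

/-- The Wehrl entropy of a state `ψ ∈ ℂ^(n+1)`. -/
noncomputable def wehrl (n : ℕ) (ψ : EuclideanSpace ℂ (Fin (n + 1))) : ℝ :=
  -((n : ℝ) + 1) * sphereInt (fun Ω => ‖ov n Ω ψ‖ ^ 2 * Real.log (‖ov n Ω ψ‖ ^ 2))

/-- `ψ` is represented by the `n` sphere points `ω 1, …, ω n` with constant `c`:
`|⟨v_n(Ω), ψ⟩|² = c · ∏ k, |⟨v_1(Ω), v_1(ω k)⟩|²` for every sphere point `Ω`. -/
def Represents (n : ℕ) (ψ : EuclideanSpace ℂ (Fin (n + 1))) (ω : Fin n → ℝ × ℝ) (c : ℝ) :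
    Prop :=
  (∀ k, IsSpherePt (ω k)) ∧
    ∀ Ω, IsSpherePt Ω → ‖ov n Ω ψ‖ ^ 2 = c * ∏ k : Fin n, ‖ov 1 Ω (bloch 1 (ω k))‖ ^ 2

/-- Squared chordal distance between two sphere points (sphere of radius 1/2):
`d(ω, ω') = 1 - |⟨v_1(ω), v_1(ω')⟩|²`. -/
noncomputable def chord (ω ω' : ℝ × ℝ) : ℝ := 1 - ‖ov 1 ω (bloch 1 ω')‖ ^ 2

/-- `ψ` is a coherent state, i.e. `ψ = e^{iθ} v_n(Ω)` for some `θ` and some sphere point `Ω`. -/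
def IsCoherent (n : ℕ) (ψ : EuclideanSpace ℂ (Fin (n + 1))) : Prop :=
  ∃ (θ : ℝ) (Ω : ℝ × ℝ), IsSpherePt Ω ∧ ψ = Complex.exp ((θ : ℂ) * Complex.I) • bloch n Ω

noncomputable def zz (Ω : ℝ × ℝ) : ℂ := (Real.sqrt Ω.1 : ℂ) * Complex.exp ((Ω.2 : ℂ) * Complex.I)
noncomputable def ww (Ω : ℝ × ℝ) : ℂ := (Real.sqrt (1 - Ω.1) : ℂ)

lemma ov_eq (n : ℕ) (Ω : ℝ × ℝ) (ψ : EuclideanSpace ℂ (Fin (n + 1))) :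
    ov n Ω ψ = ∑ k : Fin (n + 1),
      ((Real.sqrt (n.choose k) : ℂ) * ψ k) * zz Ω ^ (k : ℕ) * ww Ω ^ (n - (k : ℕ)) := by
  unfold ov zz ww
  rw [PiLp.inner_apply]
  congr 1; funext k
  simp only [RCLike.inner_apply, bloch, PiLp.toLp_apply, map_mul, Complex.conj_ofReal, ← Complex.exp_conj, map_neg,
    Complex.conj_I, Complex.conj_natCast]
  rw [mul_pow, ← Complex.exp_nat_mul]
  push_cast
  ring_nf

lemma ov_one (Ω ω' : ℝ × ℝ) : ov 1 Ω (bloch 1 ω') =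
    (Real.sqrt (1 - ω'.1) : ℂ) * ww Ω +
      (Real.sqrt ω'.1 : ℂ) * Complex.exp (-(ω'.2 : ℂ) * Complex.I) * zz Ω := by
  rw [ov_eq, Fin.sum_univ_two]
  simp only [bloch, PiLp.toLp_apply, Fin.val_zero, Fin.val_one, Fin.isValue, pow_zero, pow_one,
    Nat.choose_self, Nat.choose_zero_right, Nat.cast_one, Real.sqrt_one, Nat.sub_self,
    Nat.sub_zero, Nat.cast_zero, one_mul, mul_one, neg_zero, zero_mul, Complex.exp_zero]
  push_cast
  ring

/-- sphere point associated to a root `r`. -/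
noncomputable def ptOf (r : ℂ) : ℝ × ℝ :=
  (1 / (1 + ‖r‖ ^ 2), if 0 ≤ (-r).arg then (-r).arg else (-r).arg + 2 * Real.pi)

lemma isSpherePt_ptOf (r : ℂ) : IsSpherePt (ptOf r) := by
  have h1 : (0:ℝ) < 1 + ‖r‖ ^ 2 := by positivity
  have ha := Complex.arg_le_pi (-r)
  have hb := Complex.neg_pi_lt_arg (-r)
  have hpi := Real.pi_pos
  unfold ptOf
  refine ⟨⟨by positivity, by rw [div_le_one h1]; nlinarith [sq_nonneg ‖r‖]⟩, ?_⟩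
  constructor <;> dsimp only <;> split <;> linarith

lemma exp_ptOf (r : ℂ) :
    Complex.exp (((ptOf r).2 : ℂ) * Complex.I) * (‖r‖ : ℂ) = -r := by
  have key : Complex.exp (((-r).arg : ℂ) * Complex.I) * (‖r‖ : ℂ) = -r := by
    rw [mul_comm, show (‖r‖ : ℂ) = (‖-r‖ : ℂ) by
      rw [norm_neg]]
    exact Complex.norm_mul_exp_arg_mul_I (-r)
  unfold ptOf
  dsimp only
  split
  · exact key
  · have h2 : Complex.exp ((((-r).arg + 2 * Real.pi : ℝ) : ℂ) * Complex.I)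
        = Complex.exp (((-r).arg : ℂ) * Complex.I) := by
      push_cast
      rw [add_mul, Complex.exp_add, show ((2:ℂ) * (Real.pi:ℂ) * Complex.I)
        = 2 * Real.pi * Complex.I from rfl, Complex.exp_two_pi_mul_I, mul_one]
    rw [h2]; exact key

lemma factor_eq (Ω : ℝ × ℝ) (r : ℂ) :
    ‖ov 1 Ω (bloch 1 (ptOf r))‖ ^ 2 * (1 + ‖r‖ ^ 2) = ‖zz Ω - r * ww Ω‖ ^ 2 := by
  have hs : (0:ℝ) < 1 + ‖r‖ ^ 2 := by positivity
  have hp1 : (ptOf r).1 = 1 / (1 + ‖r‖ ^ 2) := rfl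
  have hnn : (0:ℝ) ≤ 1 - 1 / (1 + ‖r‖ ^ 2) := by
    rw [sub_nonneg, div_le_one hs]; nlinarith [sq_nonneg ‖r‖]
  have e1 : Real.sqrt (1 - (ptOf r).1) * Real.sqrt (1 + ‖r‖ ^ 2) = ‖r‖ := by
    rw [hp1, ← Real.sqrt_mul hnn,
      show (1 - 1 / (1 + ‖r‖ ^ 2)) * (1 + ‖r‖ ^ 2) = ‖r‖ ^ 2 by field_simp; ring,
      Real.sqrt_sq (norm_nonneg r)]
  have e2 : Real.sqrt (ptOf r).1 * Real.sqrt (1 + ‖r‖ ^ 2) = 1 := by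
    rw [hp1, ← Real.sqrt_mul (by positivity),
      show 1 / (1 + ‖r‖ ^ 2) * (1 + ‖r‖ ^ 2) = 1 by field_simp, Real.sqrt_one]
  have hE : Complex.exp (-(((ptOf r).2 : ℝ) : ℂ) * Complex.I) *
      Complex.exp ((((ptOf r).2 : ℝ) : ℂ) * Complex.I) = 1 := by
    rw [← Complex.exp_add, show -(((ptOf r).2 : ℝ) : ℂ) * Complex.I +
      (((ptOf r).2 : ℝ) : ℂ) * Complex.I = 0 by ring, Complex.exp_zero]
  have h1 : ((Real.sqrt (1 - (ptOf r).1) : ℝ) : ℂ) *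
      ((Real.sqrt (1 + ‖r‖ ^ 2) : ℝ) : ℂ) = (‖r‖ : ℂ) := by
    rw [← Complex.ofReal_mul, e1]
  have h2 : ((Real.sqrt (ptOf r).1 : ℝ) : ℂ) *
      ((Real.sqrt (1 + ‖r‖ ^ 2) : ℝ) : ℂ) = 1 := by
    rw [← Complex.ofReal_mul, e2]; norm_num
  have main : ov 1 Ω (bloch 1 (ptOf r)) * ((Real.sqrt (1 + ‖r‖ ^ 2) : ℝ) : ℂ) *
      Complex.exp ((((ptOf r).2 : ℝ) : ℂ) * Complex.I) = zz Ω - r * ww Ω := by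
    rw [ov_one]
    have h3 := exp_ptOf r
    linear_combination (ww Ω * Complex.exp ((((ptOf r).2 : ℝ) : ℂ) * Complex.I)) * h1 +
      (ww Ω) * h3 + (Complex.exp (-(((ptOf r).2 : ℝ) : ℂ) * Complex.I) *
        Complex.exp ((((ptOf r).2 : ℝ) : ℂ) * Complex.I) * zz Ω) * h2 + zz Ω * hE
  have hnorm := congrArg (fun x : ℂ => ‖x‖ ^ 2) main
  simp only [norm_mul, Complex.norm_exp_ofReal_mul_I, mul_one,
    Complex.norm_real, Real.norm_eq_abs, abs_of_nonneg (Real.sqrt_nonneg _)] at hnorm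
  rw [mul_pow, Real.sq_sqrt (by positivity)] at hnorm
  simpa using hnorm

lemma ov_pad (Ω : ℝ × ℝ) : ov 1 Ω (bloch 1 (0, 0)) = ww Ω := by
  rw [ov_one]; norm_num

lemma isSpherePt_pad : IsSpherePt ((0:ℝ), (0:ℝ)) :=
  ⟨⟨le_refl 0, zero_le_one⟩, le_refl 0, by positivity⟩


/-- Geometric representation of spin states: every unit vector `ψ ∈ ℂ^(n+1)` is
represented by `n` points on the sphere together with a constant `c > 0`. -/
theorem exists_geometric_representation (n : ℕ) (hn : 1 ≤ n)
    (ψ : EuclideanSpace ℂ (Fin (n + 1))) (hψ : ‖ψ‖ = 1) :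
    ∃ (ω : Fin n → ℝ × ℝ) (c : ℝ), 0 < c ∧ Represents n ψ ω c := by
  unfold Represents
  classical
  set coefN : ℕ → ℂ := fun k =>
    if h : k < n + 1 then ((Real.sqrt (n.choose k) : ℝ) : ℂ) * ψ ⟨k, h⟩ else 0 with hcoefN
  set P : Polynomial ℂ := ∑ k ∈ Finset.range (n + 1), Polynomial.C (coefN k) * Polynomial.X ^ k
    with hPdef
  have hcoeff : ∀ k, P.coeff k = coefN k := by
    intro k
    rw [hPdef, Polynomial.finset_sum_coeff]
    simp only [Polynomial.coeff_C_mul, Polynomial.coeff_X_pow, mul_ite, mul_one, mul_zero]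
    rw [Finset.sum_ite_eq]
    split
    · rfl
    · rename_i hk
      have hk' : n + 1 ≤ k := by simpa using hk
      rw [hcoefN]
      simp only []
      split
      · omega
      · rfl
  have hdeg : P.natDegree ≤ n :=
    Polynomial.natDegree_le_iff_coeff_eq_zero.2 fun N hN => by
      rw [hcoeff]; exact dif_neg (by omega)
  have hψ0 : ψ ≠ 0 := by intro h; rw [h] at hψ; simp at hψ
  obtain ⟨k0, hk0⟩ : ∃ k, ψ k ≠ 0 := by
    by_contra h; push_neg at h; exact hψ0 (by ext i; exact h i)
  have hP0 : P ≠ 0 := by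
    intro h
    have h1 := hcoeff k0
    rw [h, Polynomial.coeff_zero] at h1
    have h2 : ((Real.sqrt (n.choose (k0 : ℕ)) : ℝ) : ℂ) * ψ k0 = 0 := by
      rw [hcoefN] at h1
      simpa [k0.isLt, Fin.eta] using h1.symm
    have h3 : (0:ℕ) < n.choose (k0 : ℕ) :=
      Nat.choose_pos (by have := k0.isLt; omega : (k0 : ℕ) ≤ n)
    have h4 : Real.sqrt (n.choose (k0 : ℕ)) ≠ 0 := by
      refine Real.sqrt_ne_zero'.2 ?_
      exact_mod_cast h3
    rcases mul_eq_zero.1 h2 with h5 | h5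
    · exact h4 (by exact_mod_cast h5)
    · exact hk0 h5
  have hγ : P.leadingCoeff ≠ 0 := Polynomial.leadingCoeff_ne_zero.mpr hP0
  set γ := P.leadingCoeff with hγdef
  set L := P.roots.toList with hLdef
  set d := L.length with hddef
  have hdn : d ≤ n := by
    rw [hddef, Multiset.length_toList,
      (Polynomial.splits_iff_card_roots).1 (IsAlgClosed.splits P)]
    exact hdeg
  set ρ : ℕ → ℂ := fun i => L.getD i 0 with hρdef
  have heval : ∀ x : ℂ, P.eval x = γ * ∏ i ∈ Finset.range d, (x - ρ i) := by
    intro x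
    conv_lhs => rw [(IsAlgClosed.splits P).eq_prod_roots]
    rw [Polynomial.eval_mul, Polynomial.eval_C, Polynomial.eval_multiset_prod, Multiset.map_map]
    congr 1
    have hr : P.roots = ↑L := (P.roots.coe_toList).symm
    rw [hr, Multiset.map_coe, Multiset.prod_coe]
    conv_lhs => rw [← List.ofFn_get L, List.map_ofFn, List.prod_ofFn]
    rw [← Fin.prod_univ_eq_prod_range (fun i => x - ρ i) d]
    refine Finset.prod_congr rfl fun i _ => ?_
    simp only [Function.comp_apply, Polynomial.eval_sub, Polynomial.eval_X, Polynomial.eval_C]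
    rw [hρdef]
    congr 1
    exact (L.getD_eq_getElem 0 i.isLt).symm
  have hPeval : ∀ x : ℂ, P.eval x = ∑ k ∈ Finset.range (n + 1), coefN k * x ^ k := by
    intro x
    rw [hPdef, Polynomial.eval_finset_sum]
    simp [Polynomial.eval_mul]
  have hhom : ∀ z w : ℂ,
      (∑ k ∈ Finset.range (n + 1), coefN k * z ^ k * w ^ (n - k)) =
        γ * w ^ (n - d) * ∏ i ∈ Finset.range d, (z - ρ i * w) := by
    intro z
    have hfun : (fun w : ℂ => ∑ k ∈ Finset.range (n + 1), coefN k * z ^ k * w ^ (n - k)) =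
        fun w : ℂ => γ * w ^ (n - d) * ∏ i ∈ Finset.range d, (z - ρ i * w) := by
      refine Continuous.ext_on (dense_compl_singleton 0) ?_ ?_ ?_
      · exact continuous_finset_sum _ fun k _ => (continuous_const.mul (continuous_pow _))
      · exact (continuous_const.mul (continuous_pow _)).mul
          (continuous_finset_prod _ fun i _ =>
            continuous_const.sub (continuous_const.mul continuous_id))
      · intro w hw
        have hw' : w ≠ 0 := hw
        dsimp only
        have step1 : (∑ k ∈ Finset.range (n + 1), coefN k * z ^ k * w ^ (n - k)) =
            ∑ k ∈ Finset.range (n + 1), coefN k * (z / w) ^ k * w ^ n := by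
          refine Finset.sum_congr rfl fun k hk => ?_
          have hk' : k ≤ n := by
            have := Finset.mem_range.1 hk; omega
          have hwn : w ^ n = w ^ (n - k) * w ^ k := by
            rw [← pow_add]; congr 1; omega
          rw [div_pow, hwn]
          field_simp
        rw [step1, show (∑ k ∈ Finset.range (n + 1), coefN k * (z / w) ^ k * w ^ n) =
          w ^ n * ∑ k ∈ Finset.range (n + 1), coefN k * (z / w) ^ k by
            rw [Finset.mul_sum]; exact Finset.sum_congr rfl fun k _ => by ring,
          ← hPeval, heval]
        have hprod : (∏ i ∈ Finset.range d, (z - ρ i * w)) =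
            w ^ d * ∏ i ∈ Finset.range d, (z / w - ρ i) := by
          rw [show (w:ℂ) ^ d = ∏ _i ∈ Finset.range d, w by
            rw [Finset.prod_const, Finset.card_range], ← Finset.prod_mul_distrib]
          refine Finset.prod_congr rfl fun i _ => ?_
          rw [mul_sub, mul_div_cancel₀ z hw', mul_comm w (ρ i)]
        have hw2 : (w:ℂ) ^ n = w ^ (n - d) * w ^ d := by
          rw [← pow_add]; congr 1; omega
        rw [hprod, hw2]
        ring
    intro w
    exact congrFun hfun w
  -- the sphere points
  refine ⟨fun k => if (k : ℕ) < d then ptOf (ρ k) else (0, 0),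
    ‖γ‖ ^ 2 * ∏ i ∈ Finset.range d, (1 + ‖ρ i‖ ^ 2), ?_, ?_, ?_⟩
  · exact mul_pos (pow_pos (norm_pos_iff.2 hγ) 2)
      (Finset.prod_pos fun i _ => by positivity)
  · intro k
    dsimp only
    split
    · exact isSpherePt_ptOf _
    · exact isSpherePt_pad
  · intro Ω hΩ
    have hov : ov n Ω ψ = γ * ww Ω ^ (n - d) * ∏ i ∈ Finset.range d, (zz Ω - ρ i * ww Ω) := by
      rw [ov_eq, ← hhom (zz Ω) (ww Ω),
        ← Fin.sum_univ_eq_sum_range (fun j => coefN j * zz Ω ^ j * ww Ω ^ (n - j)) (n + 1)]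
      refine Finset.sum_congr rfl fun k _ => ?_
      have : coefN (k : ℕ) = ((Real.sqrt (n.choose (k : ℕ)) : ℝ) : ℂ) * ψ k := by
        rw [hcoefN]
        simp [k.isLt, Fin.eta]
      rw [this]
    -- norms of LHS
    have hLHS : ‖ov n Ω ψ‖ ^ 2 =
        ‖γ‖ ^ 2 * (‖ww Ω‖ ^ 2) ^ (n - d) * ∏ i ∈ Finset.range d, ‖zz Ω - ρ i * ww Ω‖ ^ 2 := by
      rw [hov, norm_mul, norm_mul, norm_pow, norm_prod, mul_pow, mul_pow, ← pow_mul,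
        ← pow_mul, ← Finset.prod_pow]
      ring
    -- the product over Fin n
    have hsplit : (∏ k : Fin n, ‖ov 1 Ω (bloch 1
          (if (k : ℕ) < d then ptOf (ρ (k : ℕ)) else (0, 0)))‖ ^ 2) =
        (∏ i ∈ Finset.range d, ‖ov 1 Ω (bloch 1 (ptOf (ρ i)))‖ ^ 2) *
          (‖ww Ω‖ ^ 2) ^ (n - d) := by
      rw [Fin.prod_univ_eq_prod_range
        (fun j => ‖ov 1 Ω (bloch 1 (if j < d then ptOf (ρ j) else (0, 0)))‖ ^ 2) n]
      conv_lhs => rw [show n = d + (n - d) by omega]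
      rw [Finset.prod_range_add]
      congr 1
      · exact Finset.prod_congr rfl fun i hi => by
          rw [if_pos (Finset.mem_range.1 hi)]
      · rw [show (∏ i ∈ Finset.range (n - d),
            ‖ov 1 Ω (bloch 1 (if d + i < d then ptOf (ρ (d + i)) else (0, 0)))‖ ^ 2) =
            ∏ _i ∈ Finset.range (n - d), ‖ww Ω‖ ^ 2 from
          Finset.prod_congr rfl fun i _ => by rw [if_neg (by omega), ov_pad],
          Finset.prod_const, Finset.card_range]
    rw [hLHS, hsplit]
    rw [show (‖γ‖ ^ 2 * ∏ i ∈ Finset.range d, (1 + ‖ρ i‖ ^ 2)) *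
        ((∏ i ∈ Finset.range d, ‖ov 1 Ω (bloch 1 (ptOf (ρ i)))‖ ^ 2) *
          (‖ww Ω‖ ^ 2) ^ (n - d)) =
        ‖γ‖ ^ 2 * (‖ww Ω‖ ^ 2) ^ (n - d) *
          ∏ i ∈ Finset.range d,
            (‖ov 1 Ω (bloch 1 (ptOf (ρ i)))‖ ^ 2 * (1 + ‖ρ i‖ ^ 2)) by
      rw [Finset.prod_mul_distrib]; ring]
    congr 1
    exact Finset.prod_congr rfl fun i _ => (factor_eq Ω (ρ i)).symm
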